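/- Let gamma ∈ (0,1), N ≥ 2, h > 0, and X ∈ R^N strictly increasing with sum_{i=1}^N X_i = 0. Then the discrete interaction energy W_gamma[X] = (h^2/(2gamma)) * sum_{i≠j} |X_i - X_j|^{-gamma} satisfies W_gamma[X] ≥ (h^2/gamma) * (N(N-1)/2) * (2|X|^2/(N-1))^{-gamma/2}. -/

import Mathlib

open Finset Real

lemma convexOn_rpow_neg {p : ℝ} (hp : p < 0) :
    ConvexOn ℝ (Set.Ioi 0) fun x : ℝ => x ^ p := by
  refine (strictConvexOn_of_deriv2_pos' (convex_Ioi 0) ?_ ?_).convexOn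
  · intro x hx
    exact (Real.continuousAt_rpow_const x p (Or.inl (ne_of_gt hx))).continuousWithinAt
  · intro x hx
    have hx0 : (0:ℝ) < x := hx
    have hev : deriv (fun y : ℝ => y ^ p) =ᶠ[nhds x] fun y => p * y ^ (p - 1) := by
      filter_upwards [eventually_gt_nhds hx0] with y hy
      exact Real.deriv_rpow_const y p
    have h2 : deriv^[2] (fun y : ℝ => y ^ p) x = p * ((p-1) * x ^ (p - 1 - 1)) := by
      show deriv (deriv (fun y : ℝ => y ^ p)) x = _
      rw [Filter.EventuallyEq.deriv_eq hev]
      exact ((Real.hasDerivAt_rpow_const (p := p - 1) (Or.inl hx0.ne')).const_mul p).deriv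
    rw [h2]
    have h3 : 0 < p * (p - 1) := mul_pos_of_neg_of_neg hp (by linarith)
    have h4 := Real.rpow_pos_of_pos hx0 (p - 1 - 1)
    nlinarith

theorem stmt_2 (γ h : ℝ) (hγ : γ ∈ Set.Ioo (0 : ℝ) 1) (N : ℕ) (hN : 2 ≤ N) (hh : 0 < h)
    (X : ℕ → ℝ) (hX : ∀ i, 1 ≤ i → i < N → X i < X (i + 1))
    (hsum : ∑ i ∈ Finset.Icc 1 N, X i = 0) :
    (h ^ 2 / (2 * γ)) * ∑ i ∈ Finset.Icc 1 N, ∑ j ∈ (Finset.Icc 1 N).erase i,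
        |X i - X j| ^ (-γ) ≥
      (h ^ 2 / γ) * ((N : ℝ) * ((N : ℝ) - 1) / 2) *
        (2 * (∑ i ∈ Finset.Icc 1 N, (X i) ^ 2) / ((N : ℝ) - 1)) ^ (-γ / 2) := by
  obtain ⟨hγ0, hγ1⟩ := hγ
  set S : Finset ℕ := Finset.Icc 1 N with hS
  set Q : ℝ := ∑ i ∈ S, (X i) ^ 2 with hQ
  -- strict monotonicity
  have key : ∀ j, j ≤ N → ∀ i, 1 ≤ i → i < j → X i < X j := by
    intro j
    induction j with
    | zero => omega
    | succ n ih =>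
      intro hn i h1 hij
      rcases eq_or_lt_of_le (Nat.lt_succ_iff.mp hij) with hcase | hcase
      · exact hcase ▸ hX i h1 (by omega)
      · exact (ih (by omega) i h1 hcase).trans (hX n (by omega) (by omega))
  have hne : ∀ i ∈ S, ∀ j ∈ S, i ≠ j → X i ≠ X j := by
    intro i hi j hj hij
    simp only [hS, Finset.mem_Icc] at hi hj
    rcases lt_or_gt_of_ne hij with hlt | hlt
    · exact ne_of_lt (key j hj.2 i hi.1 hlt)
    · exact (ne_of_lt (key i hi.2 j hj.1 hlt)).symm
  have hcardS : S.card = N := by simp [hS]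
  -- Q > 0
  have hQpos : 0 < Q := by
    rcases (sum_nonneg (fun i _ => sq_nonneg (X i))).lt_or_eq with hl | he
    · exact hl
    · exfalso
      have h1 : (1 : ℕ) ∈ S := by simp [hS]; omega
      have h2 : (2 : ℕ) ∈ S := by simp [hS]; omega
      have hz := (Finset.sum_eq_zero_iff_of_nonneg (fun i _ => sq_nonneg (X i))).mp he.symm
      have e1 : X 1 = 0 := by have := hz 1 h1; nlinarith [this]
      have e2 : X 2 = 0 := by have := hz 2 h2; nlinarith [this]
      have := hX 1 le_rfl (by omega)
      rw [e1] at this; rw [show (1:ℕ)+1 = 2 from rfl, e2] at this; exact lt_irrefl 0 this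
  set T : Finset (ℕ × ℕ) := S.offDiag with hT
  set M : ℝ := (N : ℝ) * ((N : ℝ) - 1) with hM
  have hMpos : 0 < M := by
    have : (2:ℝ) ≤ (N:ℝ) := by exact_mod_cast hN
    rw [hM]; nlinarith
  have hcardT : (T.card : ℝ) = M := by
    rw [hT, Finset.offDiag_card, hcardS, hM]
    have : N ≤ N * N := Nat.le_mul_of_pos_left N (by omega)
    push_cast [Nat.cast_sub this]
    ring
  -- sum over product equals 2NQ
  have hA : ∑ q ∈ T, (X q.1 - X q.2) ^ 2 = 2 * N * Q := by
    have hfull : ∑ q ∈ S ×ˢ S, (X q.1 - X q.2) ^ 2 = 2 * N * Q := by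
      rw [Finset.sum_product]
      have inner : ∀ i, ∑ j ∈ S, (X i - X j) ^ 2 = N * X i ^ 2 + Q := by
        intro i
        have expand : ∀ j, (X i - X j) ^ 2 = X i ^ 2 - 2 * X i * X j + X j ^ 2 := by
          intro j; ring
        simp_rw [expand, Finset.sum_add_distrib, Finset.sum_sub_distrib, Finset.sum_const,
          ← Finset.mul_sum, hsum, hcardS, ← hQ]
        ring
      rw [Finset.sum_congr rfl (fun i _ => inner i), Finset.sum_add_distrib, Finset.sum_const,
        ← Finset.mul_sum, ← hQ, hcardS, nsmul_eq_mul]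
      push_cast; ring
    have hsplit := Finset.sum_filter_add_sum_filter_not (S ×ˢ S)
      (fun q : ℕ × ℕ => q.1 ≠ q.2) (fun q => (X q.1 - X q.2) ^ 2)
    have hdiag : ∑ q ∈ (S ×ˢ S).filter (fun q : ℕ × ℕ => ¬ q.1 ≠ q.2),
        (X q.1 - X q.2) ^ 2 = 0 := by
      apply Finset.sum_eq_zero
      intro q hq
      simp only [Finset.mem_filter, not_not] at hq
      rw [hq.2]; ring
    have : T = (S ×ˢ S).filter (fun q : ℕ × ℕ => q.1 ≠ q.2) := by
      ext q; simp [hT, Finset.mem_offDiag, and_assoc]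
    rw [this, ← hfull, ← hsplit, hdiag, add_zero]
  -- each (X i - X j)^2 > 0 on T
  have hzpos : ∀ q ∈ T, (X q.1 - X q.2) ^ 2 ∈ Set.Ioi (0:ℝ) := by
    intro q hq
    rw [hT, Finset.mem_offDiag] at hq
    have hne0 : X q.1 - X q.2 ≠ 0 := sub_ne_zero.mpr (hne q.1 hq.1 q.2 hq.2.1 hq.2.2)
    exact Set.mem_Ioi.mpr (by positivity)
  -- Jensen
  set e : ℝ := -γ / 2 with he
  have hconv : ConvexOn ℝ (Set.Ioi 0) fun x : ℝ => x ^ e := convexOn_rpow_neg (by rw [he]; linarith)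
  have hMne : M ≠ 0 := ne_of_gt hMpos
  have hw1 : ∑ _q ∈ T, M⁻¹ = 1 := by
    rw [Finset.sum_const, nsmul_eq_mul, hcardT, mul_inv_cancel₀ hMne]
  have hjensen := hconv.map_sum_le (t := T) (w := fun _ => M⁻¹)
    (p := fun q => (X q.1 - X q.2) ^ 2) (fun _ _ => by positivity) hw1 hzpos
  simp only [smul_eq_mul] at hjensen
  rw [← Finset.mul_sum, hA, ← Finset.mul_sum] at hjensen
  have hcm : M⁻¹ * (2 * N * Q) = 2 * Q / ((N:ℝ) - 1) := by
    rw [hM]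
    have hN1 : (N:ℝ) - 1 ≠ 0 := by
      have : (2:ℝ) ≤ (N:ℝ) := by exact_mod_cast hN
      intro hc; nlinarith
    have hN0 : (N:ℝ) ≠ 0 := by positivity
    field_simp
  rw [hcm] at hjensen
  -- rewrite goal double sum as offDiag sum of squares
  have hdouble : ∑ i ∈ S, ∑ j ∈ S.erase i, |X i - X j| ^ (-γ)
      = ∑ q ∈ T, ((X q.1 - X q.2) ^ 2) ^ e := by
    have step1 : ∀ q ∈ T, ((X q.1 - X q.2) ^ 2) ^ e = |X q.1 - X q.2| ^ (-γ) := by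
      intro q _
      have habs : (X q.1 - X q.2) ^ 2 = |X q.1 - X q.2| ^ (2:ℕ) := (sq_abs _).symm
      rw [habs, ← Real.rpow_natCast, ← Real.rpow_mul (abs_nonneg _)]
      congr 1
      rw [he]; push_cast; ring
    rw [Finset.sum_congr rfl step1]
    have : T = (S ×ˢ S).filter (fun q : ℕ × ℕ => q.1 ≠ q.2) := by
      ext q; simp [hT, Finset.mem_offDiag, and_assoc]
    rw [this, Finset.sum_filter, Finset.sum_product]
    apply Finset.sum_congr rfl
    intro i _
    rw [← Finset.filter_ne' S i, Finset.sum_filter]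
    apply Finset.sum_congr rfl
    intro j _
    by_cases hij : i = j <;> simp [hij, ne_comm]
  rw [hdouble]
  -- final arithmetic
  have hkey : M * (2 * Q / ((N:ℝ) - 1)) ^ e ≤ ∑ q ∈ T, ((X q.1 - X q.2) ^ 2) ^ e := by
    calc M * (2 * Q / ((N:ℝ) - 1)) ^ e
        ≤ M * (M⁻¹ * ∑ q ∈ T, ((X q.1 - X q.2) ^ 2) ^ e) :=
          mul_le_mul_of_nonneg_left hjensen hMpos.le
      _ = ∑ q ∈ T, ((X q.1 - X q.2) ^ 2) ^ e := by
          rw [← mul_assoc, mul_inv_cancel₀ hMne, one_mul]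
  have hrw : (h ^ 2 / γ) * ((N : ℝ) * ((N : ℝ) - 1) / 2) * (2 * Q / ((N:ℝ) - 1)) ^ (-γ/2)
      = (h ^ 2 / (2 * γ)) * (M * (2 * Q / ((N:ℝ) - 1)) ^ e) := by
    rw [hM, ← he]
    field_simp
  rw [ge_iff_le, hrw]
  exact mul_le_mul_of_nonneg_left hkey (by positivity)
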